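/- arXiv:2307.10891 — 2 statements merged into one kernel-verified Lean document; each statement's English description precedes it below -/
import Mathlib

section
/- Semantic equivalence propagates through the whole network: Let N be a feedforward network with layers computed by z^{(ℓ+1)} = φ(W^{(ℓ)} z^{(ℓ)} + b^{(ℓ+1)}) and input z^{(0)} = x. Fix a layer ℓ, a neuron index i of layer ℓ, a basis B ⊆ {1,…,n_ℓ}\{i}, and coefficients α_j. Let Ñ be the network obtained by replacing in W^{(ℓ)} the column of i via W̃^{(ℓ)}_{·,j} = W^{(ℓ)}_{·,j} + α_j W^{(ℓ)}_{·,i} for j ∈ B and zeroing column i, leaving all other layers unchanged. If for every input x in a set X we have z^{(ℓ)}_i(x) = Σ_{j∈B} α_j z^{(ℓ)}_j(x), then N(x) = Ñ(x) for all x ∈ X. -/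
/-- Semantic equivalence propagates through the whole network: if, on every input of `X`,
neuron `i` of layer `ℓ` equals the linear combination of the basis neurons, then replacing
its outgoing column leaves the network's output unchanged on `X`.  Here `z` computes the
activations of layer `ℓ` of the original network (earlier layers are unchanged) and `T`
computes the remaining layers after layer `ℓ+1` (also unchanged). -/
theorem linear_abstraction_network_equiv {Input Output : Type*} {n m : ℕ}
    (X : Set Input)
    (z : Input → Fin n → ℝ)
    (φ : ℝ → ℝ) (W : Matrix (Fin m) (Fin n) ℝ) (b : Fin m → ℝ)
    (T : (Fin m → ℝ) → Output)
    (i : Fin n) (B : Finset (Fin n)) (hiB : i ∉ B) (α : Fin n → ℝ)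
    (Wt : Matrix (Fin m) (Fin n) ℝ)
    (hWt : ∀ r c, Wt r c =
      if c = i then 0 else if c ∈ B then W r c + α c * W r i else W r c)
    (N Nt : Input → Output)
    (hN : ∀ x, N x = T (fun r => φ ((W.mulVec (z x) + b) r)))
    (hNt : ∀ x, Nt x = T (fun r => φ ((Wt.mulVec (z x) + b) r)))
    (hlin : ∀ x ∈ X, z x i = ∑ j ∈ B, α j * z x j) :
    ∀ x ∈ X, N x = Nt x := by
  intro x hx
  rw [hN, hNt]
  congr 1
  funext r
  congr 1
  show (W.mulVec (z x)) r + b r = (Wt.mulVec (z x)) r + b r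
  congr 1
  simp only [Matrix.mulVec, dotProduct]
  have key : ∀ c, Wt r c * z x c =
      W r c * z x c + (if c ∈ B then α c * W r i * z x c else 0)
        - (if c = i then W r i * z x i else 0) := by
    intro c
    rw [hWt]
    by_cases hc : c = i
    · subst hc
      simp [if_neg hiB]
    · by_cases hcB : c ∈ B <;> simp [hc, hcB] <;> ring
  rw [Finset.sum_congr rfl (fun c _ => key c)]
  rw [Finset.sum_sub_distrib, Finset.sum_add_distrib,
    Finset.sum_ite_eq' Finset.univ i, Finset.sum_ite_mem]
  simp only [Finset.mem_univ, if_true, Finset.univ_inter]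
  have : ∑ j ∈ B, α j * W r i * z x j = W r i * ∑ j ∈ B, α j * z x j := by
    rw [Finset.mul_sum]; exact Finset.sum_congr rfl fun j _ => by ring
  rw [this, ← hlin x hx]
  ring
end

section
/- Zero projection error onto a basis implies perfect network reduction: Let N be a feedforward network and ℓ a layer with semantic matrix Z^{(ℓ)} over an input set X. If B ⊆ {1,…,n_ℓ} is such that every row Z^{(ℓ)}_{i,·} for i ∉ B lies in the span of {Z^{(ℓ)}_{j,·} : j ∈ B}, then there exists an abstracted network Ñ, obtained by replacing all neurons i ∉ B by linear combinations over B, such that Ñ(x) = N(x) for all x ∈ X. -/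
/-- Zero projection error onto a basis implies perfect network reduction: if every
non-basis row of the semantic matrix of layer `ℓ` (the activations `z x i` over inputs
`x ∈ X`) lies in the span of the basis rows, then there is an abstracted network,
obtained by replacing every neuron outside `B` by a linear combination over `B`,
agreeing with the original network on all of `X`.  Here `z` computes the layer-`ℓ`
activations, `V, c` is the outgoing affine map and `T` the rest of the network. -/
theorem zero_projection_error_perfect_reduction {Input Output : Type*} {n p : ℕ}
    (X : Set Input) (z : Input → Fin n → ℝ)
    (B : Finset (Fin n))
    (hspan : ∀ i ∉ B, (fun x : X => z x i) ∈
      Submodule.span ℝ ((fun j => (fun x : X => z x j)) '' (B : Set (Fin n))))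
    (V : Matrix (Fin p) (Fin n) ℝ) (c : Fin p → ℝ)
    (T : (Fin p → ℝ) → Output)
    (N : Input → Output) (hN : ∀ x, N x = T (V.mulVec (z x) + c)) :
    ∃ (α : Fin n → Fin n → ℝ) (Vt : Matrix (Fin p) (Fin n) ℝ),
      (∀ r t, Vt r t = if t ∈ B then V r t + ∑ i ∈ Bᶜ, α i t * V r i else 0) ∧
      ∀ x ∈ X, T (Vt.mulVec (z x) + c) = N x := by
  classical
  have key : ∀ i ∉ B, ∃ a : Fin n → ℝ, ∀ x : X, z x i = ∑ t ∈ B, a t * z x t := by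
    intro i hi
    have h := hspan i hi
    rw [Finsupp.mem_span_image_iff_linearCombination] at h
    obtain ⟨l, hl, hsum⟩ := h
    refine ⟨fun t => l t, fun x => ?_⟩
    have h1 : (Finsupp.linearCombination ℝ (fun j => (fun x : X => z x j))) l x = z x i := by
      rw [hsum]
    rw [Finsupp.linearCombination_apply, Finsupp.sum] at h1
    have h2 : (∑ t ∈ l.support, l t • (fun x : X => z x t)) x
        = ∑ t ∈ l.support, l t * z x t := by
      rw [Finset.sum_apply]; rfl
    rw [h2] at h1
    rw [← h1]
    have hsub : l.support ⊆ B := fun t ht => hl ht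
    exact Finset.sum_subset hsub fun t _ ht => by
      simp [Finsupp.notMem_support_iff.mp ht]
  set a : Fin n → Fin n → ℝ := fun i =>
    if h : i ∈ B then 0 else (key i h).choose with ha
  have hkey : ∀ i ∉ B, ∀ x : X, z x i = ∑ t ∈ B, a i t * z x t := by
    intro i hi x
    have h := (key i hi).choose_spec x
    simp only [ha, dif_neg hi]
    exact h
  refine ⟨a, fun r t => if t ∈ B then V r t + ∑ i ∈ Bᶜ, a i t * V r i else 0,
    fun r t => rfl, ?_⟩
  intro x hx
  rw [hN]
  congr 1
  congr 1
  funext r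
  show (∑ t, (if t ∈ B then V r t + ∑ i ∈ Bᶜ, a i t * V r i else 0) * z x t)
      = ∑ t, V r t * z x t
  rw [← Finset.sum_add_sum_compl B, ← Finset.sum_add_sum_compl B (fun t => V r t * z x t)]
  have hz : ∀ t ∈ Bᶜ, (if t ∈ B then V r t + ∑ i ∈ Bᶜ, a i t * V r i else 0) * z x t = 0 := by
    intro t ht
    simp [Finset.mem_compl.mp ht]
  rw [Finset.sum_congr rfl hz, Finset.sum_const_zero, add_zero]
  have hB : ∀ t ∈ B, (if t ∈ B then V r t + ∑ i ∈ Bᶜ, a i t * V r i else 0) * z x t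
      = V r t * z x t + ∑ i ∈ Bᶜ, a i t * V r i * z x t := by
    intro t ht
    rw [if_pos ht, add_mul, Finset.sum_mul]
  rw [Finset.sum_congr rfl hB, Finset.sum_add_distrib]
  congr 1
  rw [Finset.sum_comm]
  refine Finset.sum_congr rfl fun i hi => ?_
  have h := hkey i (Finset.mem_compl.mp hi) ⟨x, hx⟩
  simp only at h
  calc ∑ t ∈ B, a i t * V r i * z x t = V r i * ∑ t ∈ B, a i t * z x t := by
        rw [Finset.mul_sum]; exact Finset.sum_congr rfl fun t _ => by ring
    _ = V r i * z x i := by rw [← h]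
end
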